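/- For every real ν ≥ 1/2, the function t ↦ f_ν(t) = I_ν(t)/I_{ν−1}(t) is strictly increasing on (0,∞). -/

import Mathlib

open MeasureTheory Real Filter Set
open scoped ENNReal NNReal Topology

noncomputable section

/-- The modified Bessel function of the first kind `I_ν(t)`. -/
def besselI (ν t : ℝ) : ℝ :=
  ∑' m : ℕ, (t / 2) ^ (2 * (m : ℝ) + ν) / ((m.factorial : ℝ) * Real.Gamma ((m : ℝ) + ν + 1))

/-- The ratio `f_ν(t) = I_ν(t) / I_{ν-1}(t)`. -/
def besselRatio (ν t : ℝ) : ℝ := besselI ν t / besselI (ν - 1) t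

/-- The inverse `f_ν⁻¹ : (0,1) → (0,∞)` of the strictly increasing bijection
`f_ν : (0,∞) → (0,1)`. -/
def besselRatioInv (ν y : ℝ) : ℝ := Function.invFunOn (besselRatio ν) (Set.Ioi 0) y

/-- The function `ξ_ν(t) = -t f_ν(t) + log((2π)^ν I_{ν-1}(t) / t^{ν-1})`. -/
def xiFun (ν t : ℝ) : ℝ :=
  -t * besselRatio ν t + Real.log ((2 * π) ^ ν * besselI (ν - 1) t / t ^ (ν - 1))

/-- The function `h_ν(t) = ξ_ν(f_ν⁻¹(t))`, for `t ∈ (0,1)`. -/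
def hFun (ν t : ℝ) : ℝ := xiFun ν (besselRatioInv ν t)

/-- Surface area of the unit `(n-1)`-sphere in `ℝⁿ`: `S_{n-1} = 2 π^{n/2} / Γ(n/2)`. -/
def surfaceArea (n : ℕ) : ℝ := 2 * π ^ ((n : ℝ) / 2) / Real.Gamma ((n : ℝ) / 2)

/-- `n`-dimensional Euclidean space. -/
abbrev EucSp (n : ℕ) := EuclideanSpace ℝ (Fin n)

/-- The uniform (normalized rotation-invariant) probability distribution on the sphere
`S^{n-1}(R) = {x ∈ ℝⁿ : ‖x‖ = R}`; for `R = 0` it is the point mass at the origin. -/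
def sphereUniform (n : ℕ) (R : ℝ) : Measure (EucSp n) :=
  ((volume : Measure (EucSp n)).toSphere Set.univ)⁻¹ •
    Measure.map (fun x : Metric.sphere (0 : EucSp n) 1 => R • (x : EucSp n))
      (volume : Measure (EucSp n)).toSphere

/-- Kullback-Leibler divergence `KL(μ‖ν)`, with value `∞` unless `μ ≪ ν` and the
log-likelihood ratio is `μ`-integrable. -/
def klDiv {Ω : Type*} [MeasurableSpace Ω] (μ ν : Measure Ω) : ℝ≥0∞ :=
  open scoped Classical in
  if μ ≪ ν ∧ Integrable (llr μ ν) μ then ENNReal.ofReal (∫ x, llr μ ν x ∂μ) else ⊤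

/-- The rate-distortion function `R_n(D;R)` of the uniform distribution on `S^{n-1}(R)`
under squared error distortion: the infimum of the mutual information `I(X̂;X)` over all
joint laws `π` of pairs `(X̂, X)` of `ℝⁿ`-valued random vectors such that `X ∼ μ_R` and
`E[‖X̂ - X‖²] ≤ D`. -/
def rateDistortion (n : ℕ) (D R : ℝ) : ℝ≥0∞ :=
  ⨅ (P : Measure (EucSp n × EucSp n)) (_ : IsProbabilityMeasure P)
    (_ : Measure.map Prod.snd P = sphereUniform n R)
    (_ : ∫⁻ y, ENNReal.ofReal (‖y.1 - y.2‖ ^ (2:ℕ)) ∂P ≤ ENNReal.ofReal D),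
    klDiv P ((Measure.map Prod.fst P).prod (Measure.map Prod.snd P))


namespace BesselAux

open Finset


/-- ascending factorial `b(b+1)...(b+k-1)` -/
def asc (b : ℝ) : ℕ → ℝ
  | 0 => 1
  | k + 1 => asc b k * (b + k)

@[simp] lemma asc_zero (b : ℝ) : asc b 0 = 1 := rfl

lemma asc_succ (b : ℝ) (k : ℕ) : asc b (k + 1) = asc b k * (b + k) := rfl

lemma asc_succ_left : ∀ (k : ℕ) (b : ℝ), asc b (k + 1) = b * asc (b + 1) k := by
  intro k
  induction k with
  | zero => intro b; simp [asc_succ]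
  | succ k ih =>
    intro b
    rw [asc_succ, ih b, asc_succ]
    push_cast
    ring

lemma asc_pos {b : ℝ} (hb : 0 < b) : ∀ k, 0 < asc b k := by
  intro k
  induction k with
  | zero => simp
  | succ k ih => exact mul_pos ih (by positivity)

lemma asc_ne_zero {b : ℝ} (hb : 0 < b) (k : ℕ) : asc b k ≠ 0 := (asc_pos hb k).ne'

lemma asc_add (b : ℝ) (p : ℕ) : ∀ q : ℕ, asc b (p + q) = asc b p * asc (b + p) q := by
  intro q
  induction q with
  | zero => simp
  | succ q ih =>
    rw [← Nat.add_assoc, asc_succ, ih, asc_succ]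
    push_cast
    ring

lemma asc_rev : ∀ (k : ℕ) (y : ℝ), asc y k = (-1) ^ k * asc (1 - y - k) k := by
  intro k
  induction k with
  | zero => simp
  | succ k ih =>
    intro y
    rw [asc_succ, ih y, asc_succ_left]
    have : (1 : ℝ) - y - (k + 1 : ℕ) + 1 = 1 - y - k := by push_cast; ring
    rw [this]
    push_cast
    ring

lemma asc_shift (b : ℝ) (k : ℕ) : asc b k * (b + k) = b * asc (b + 1) k := by
  rw [← asc_succ, asc_succ_left]

/-- Chu–Vandermonde identity. -/
lemma vandermonde : ∀ (n : ℕ) (b c : ℝ), 0 < c →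
    ∑ m ∈ Finset.range (n + 1), (-1 : ℝ) ^ m * (n.choose m) * asc b m / asc c m
      = asc (c - b) n / asc c n := by
  intro n
  induction n with
  | zero => intro b c hc; simp
  | succ n ih =>
    intro b c hc
    have hc1 : (0:ℝ) < c + 1 := by linarith
    have hcn : asc c n ≠ 0 := asc_ne_zero hc n
    have hcn1 : asc (c+1) n ≠ 0 := asc_ne_zero hc1 n
    -- split the sum using Pascal's rule
    have split : ∑ m ∈ Finset.range (n + 2), (-1 : ℝ) ^ m * ((n+1).choose m) * asc b m / asc c m
        = (∑ m ∈ Finset.range (n + 1), (-1 : ℝ) ^ m * (n.choose m) * asc b m / asc c m)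
          + ∑ i ∈ Finset.range (n + 1), (-1 : ℝ) ^ (i+1) * (n.choose i) * asc b (i+1) / asc c (i+1) := by
      have B : ∑ m ∈ Finset.range (n + 2), (-1 : ℝ) ^ m * (n.choose m) * asc b m / asc c m
          = ∑ m ∈ Finset.range (n + 1), (-1 : ℝ) ^ m * (n.choose m) * asc b m / asc c m := by
        rw [Finset.sum_range_succ]
        simp [Nat.choose_succ_self]
      rw [← B, Finset.sum_range_succ' _ (n+1), Finset.sum_range_succ' _ (n+1)]
      have hterm : ∀ k ∈ Finset.range (n+1),
          (-1 : ℝ) ^ (k + 1) * ((n + 1).choose (k + 1)) * asc b (k + 1) / asc c (k + 1)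
          = (-1 : ℝ) ^ (k + 1) * (n.choose (k + 1)) * asc b (k + 1) / asc c (k + 1)
            + (-1 : ℝ) ^ (k + 1) * (n.choose k) * asc b (k + 1) / asc c (k + 1) := by
        intro k _
        rw [Nat.choose_succ_succ']
        push_cast
        ring
      rw [Finset.sum_congr rfl hterm, Finset.sum_add_distrib]
      simp only [Nat.choose_zero_right, Nat.cast_one, asc_zero]
      ring
    rw [split, ih b c hc]
    have shifted : ∑ i ∈ Finset.range (n + 1), (-1 : ℝ) ^ (i+1) * (n.choose i) * asc b (i+1) / asc c (i+1)
        = -(b / c) * ∑ i ∈ Finset.range (n + 1), (-1 : ℝ) ^ i * (n.choose i) * asc (b+1) i / asc (c+1) i := by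
      rw [Finset.mul_sum]
      apply Finset.sum_congr rfl
      intro i _
      rw [asc_succ_left i b, asc_succ_left i c]
      have : asc (c+1) i ≠ 0 := asc_ne_zero hc1 i
      field_simp
      ring
    rw [shifted, ih (b+1) (c+1) hc1]
    have hr : c + 1 - (b + 1) = c - b := by ring
    rw [hr]
    have h1 : asc c (n+1) = asc c n * (c + n) := asc_succ c n
    have h2 : asc (c - b) (n+1) = asc (c - b) n * (c - b + n) := asc_succ _ n
    have hcne : c ≠ 0 := hc.ne'
    have h4 : asc (c+1) n = asc c n * (c + n) / c := by
      rw [eq_div_iff hcne]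
      linear_combination (-1 : ℝ) * asc_shift c n
    rw [h1, h2, h4]
    have hcn' : c + (n:ℝ) ≠ 0 := by positivity
    field_simp
    ring


/-- The Taylor coefficient `1/(m! Γ(m+ρ+1))`. -/
noncomputable def ac (ρ : ℝ) (m : ℕ) : ℝ := 1 / (m.factorial * Real.Gamma (m + ρ + 1))

lemma Gamma_eq {x : ℝ} (hx : 0 < x) : ∀ m : ℕ, Real.Gamma (x + m) = Real.Gamma x * asc x m := by
  intro m
  induction m with
  | zero => simp
  | succ m ih =>
    have h1 : x + ((m:ℕ) + 1 : ℕ) = (x + m) + 1 := by push_cast; ring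
    rw [h1, Real.Gamma_add_one (by positivity), ih, asc_succ]
    ring

lemma ac_eq {ρ : ℝ} (hρ : 0 < ρ + 1) (m : ℕ) :
    ac ρ m = 1 / (m.factorial * Real.Gamma (ρ + 1) * asc (ρ + 1) m) := by
  have h1 : (m : ℝ) + ρ + 1 = (ρ + 1) + m := by ring
  rw [ac, h1, Gamma_eq hρ m, mul_assoc]

lemma ac_pos {ρ : ℝ} (hρ : 0 < ρ + 1) (m : ℕ) : 0 < ac ρ m := by
  rw [ac]
  have : (0:ℝ) < (m:ℝ) + ρ + 1 := by
    have hm : (0:ℝ) ≤ (m:ℝ) := m.cast_nonneg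
    linarith
  have := Real.Gamma_pos_of_pos this
  positivity

lemma keyK_term {ν : ℝ} (hν : 0 < ν) (n i : ℕ) (hi : i ≤ n + 1) (w : ℝ) :
    w * ac ν i * ac (ν - 1) (n + 1 - i)
      = (1 / ((n+1).factorial * Real.Gamma (ν + 1) * Real.Gamma ν * asc ν (n+1))) *
        ((-1:ℝ) ^ i * ((n+1).choose i) * w * (asc (-ν - n) i / asc (ν + 1) i)) := by
  have hν1 : (0:ℝ) < ν + 1 := by linarith
  have e1 : ac ν i = 1 / (i.factorial * Real.Gamma (ν + 1) * asc (ν + 1) i) := ac_eq hν1 i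
  have e2 : ac (ν - 1) (n + 1 - i)
      = 1 / ((n+1-i).factorial * Real.Gamma ν * asc ν (n+1-i)) := by
    have := ac_eq (ρ := ν - 1) (by linarith) (n+1-i)
    simpa using this
  have hcast : ((n + 1 - i : ℕ) : ℝ) = (n:ℝ) + 1 - i := by
    rw [Nat.cast_sub hi]; push_cast; ring
  have hsplit : asc ν (n+1) = asc ν (n+1-i) * ((-1:ℝ) ^ i * asc (-ν - n) i) := by
    have h0 : (n + 1 - i) + i = n + 1 := Nat.sub_add_cancel hi
    have h1 : asc ν (n+1) = asc ν (n+1-i) * asc (ν + (n+1-i : ℕ)) i := by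
      rw [← asc_add, h0]
    rw [h1, asc_rev i (ν + (n+1-i : ℕ))]
    congr 2
    rw [hcast]; ring
  have hfact : (((n+1).choose i : ℕ) : ℝ) * i.factorial * (n+1-i).factorial
      = (n+1).factorial := by
    rw [← Nat.cast_mul, ← Nat.cast_mul, Nat.choose_mul_factorial_mul_factorial hi]
  have hG1 : (0:ℝ) < Real.Gamma (ν + 1) := Real.Gamma_pos_of_pos hν1
  have hG : (0:ℝ) < Real.Gamma ν := Real.Gamma_pos_of_pos hν
  have p1 : asc (ν+1) i ≠ 0 := asc_ne_zero hν1 i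
  have p2 : asc ν (n+1-i) ≠ 0 := asc_ne_zero hν (n+1-i)
  have p3 : asc ν (n+1) ≠ 0 := asc_ne_zero hν (n+1)
  have f1 : (i.factorial : ℝ) ≠ 0 := Nat.cast_ne_zero.2 i.factorial_ne_zero
  have f2 : ((n+1-i).factorial : ℝ) ≠ 0 := Nat.cast_ne_zero.2 (n+1-i).factorial_ne_zero
  have f3 : (((n+1)).factorial : ℝ) ≠ 0 := Nat.cast_ne_zero.2 (n+1).factorial_ne_zero
  rw [e1, e2]
  field_simp
  linear_combination (w *
      ((n+1).factorial : ℝ)) * hsplit -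
    (w * ((-1:ℝ)^i * asc (-ν - n) i *
      asc ν (n+1-i))) * hfact

lemma vandermonde_weighted (n : ℕ) (b c : ℝ) (hc : 0 < c) :
    ∑ m ∈ Finset.range (n + 2), (-1:ℝ) ^ m * ((n+1).choose m) * (m:ℝ) * asc b m / asc c m
      = -((n+1) * b / c) * (asc (c - b) n / asc (c + 1) n) := by
  have hc1 : (0:ℝ) < c + 1 := by linarith
  rw [Finset.sum_range_succ' _ (n+1)]
  have hterm : ∀ k ∈ Finset.range (n+1),
      (-1:ℝ) ^ (k+1) * ((n+1).choose (k+1)) * ((k+1 : ℕ):ℝ) * asc b (k+1) / asc c (k+1)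
        = (-((n+1) * b / c)) * ((-1:ℝ) ^ k * (n.choose k) * asc (b+1) k / asc (c+1) k) := by
    intro k _
    have hch : ((n+1).choose (k+1) * (k+1) : ℕ) = (n+1) * n.choose k := by
      rw [mul_comm (n+1) _, ← Nat.add_one_mul_choose_eq]; ring
    have hch' : (((n+1).choose (k+1) : ℕ) : ℝ) * ((k+1 : ℕ) : ℝ) = ((n:ℝ)+1) * (n.choose k) := by
      rw [← Nat.cast_mul, hch]; push_cast; ring
    rw [asc_succ_left k b, asc_succ_left k c]
    have : asc (c+1) k ≠ 0 := asc_ne_zero hc1 k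
    have hcne : c ≠ 0 := hc.ne'
    field_simp
    push_cast at hch' ⊢
    linear_combination (-((-1:ℝ)^k * b * asc (b+1) k)) * hch'
  rw [Finset.sum_congr rfl hterm, ← Finset.mul_sum, vandermonde n (b+1) (c+1) hc1]
  have : c + 1 - (b + 1) = c - b := by ring
  rw [this]
  simp

/-- The key coefficient identity: the `n+1`-st Cauchy coefficient equals `(2ν-1)` times
an explicit positive quantity. -/
lemma keyK {ν : ℝ} (hν : 0 < ν) (n : ℕ) :
    ∑ i ∈ Finset.range (n + 2), (4*(i:ℝ) - 2*n - 1) * ac ν i * ac (ν - 1) (n + 1 - i)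
      = (2*ν - 1) * (asc (2*ν + n + 1) n /
          ((n+1).factorial * Real.Gamma (ν + 1) * Real.Gamma ν * asc ν (n+1) *
            asc (ν+1) n * (ν + n + 1))) := by
  have hν1 : (0:ℝ) < ν + 1 := by linarith
  set b : ℝ := -ν - n with hb
  set c : ℝ := ν + 1 with hc
  have hstep : ∀ i ∈ Finset.range (n+2),
      (4*(i:ℝ) - 2*n - 1) * ac ν i * ac (ν - 1) (n + 1 - i)
      = (1 / ((n+1).factorial * Real.Gamma (ν + 1) * Real.Gamma ν * asc ν (n+1))) *
        ((-1:ℝ) ^ i * ((n+1).choose i) * (4*(i:ℝ) - 2*n - 1) * (asc b i / asc c i)) := by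
    intro i hi
    exact keyK_term hν n i (by simpa using Nat.lt_succ_iff.mp (Finset.mem_range.mp hi)) _
  rw [Finset.sum_congr rfl hstep, ← Finset.mul_sum]
  have hdecomp : ∑ i ∈ Finset.range (n+2),
      (-1:ℝ) ^ i * ((n+1).choose i) * (4*(i:ℝ) - 2*n - 1) * (asc b i / asc c i)
      = 4 * (∑ i ∈ Finset.range (n+2), (-1:ℝ) ^ i * ((n+1).choose i) * (i:ℝ) * asc b i / asc c i)
        + (-2*(n:ℝ) - 1) * (∑ i ∈ Finset.range (n+2), (-1:ℝ) ^ i * ((n+1).choose i) * asc b i / asc c i) := by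
    rw [Finset.mul_sum, Finset.mul_sum, ← Finset.sum_add_distrib]
    apply Finset.sum_congr rfl
    intro i _
    ring
  rw [hdecomp, vandermonde_weighted n b c hν1, vandermonde (n+1) b c hν1]
  have hcb : c - b = 2*ν + n + 1 := by rw [hb, hc]; ring
  rw [hcb]
  have h1 : asc (2*ν + n + 1) (n+1) = asc (2*ν + n + 1) n * (2*ν + 2*n + 1) := by
    rw [asc_succ]; ring_nf
  have h2 : asc c (n+1) = asc c n * (c + n) := asc_succ c n
  have h4 : asc (c+1) n = asc c n * (c + n) / c := by
    rw [eq_div_iff hν1.ne']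
    linear_combination (-1 : ℝ) * asc_shift c n
  rw [h1, h2, h4]
  have hF : (0:ℝ) < Real.Gamma (ν + 1) := Real.Gamma_pos_of_pos hν1
  have hG : (0:ℝ) < Real.Gamma ν := Real.Gamma_pos_of_pos hν
  have p1 : asc c n ≠ 0 := asc_ne_zero hν1 n
  have p3 : asc ν (n+1) ≠ 0 := asc_ne_zero hν (n+1)
  have f3 : (((n+1)).factorial : ℝ) ≠ 0 := Nat.cast_ne_zero.2 (n+1).factorial_ne_zero
  have hcn : c + (n:ℝ) ≠ 0 := by rw [hc]; positivity
  have hcnn : (ν + (n:ℝ) + 1) ≠ 0 := by positivity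
  rw [hb, hc]
  field_simp
  ring


noncomputable def gfun (ρ : ℝ) (u : ℝ) : ℝ := ∑' m : ℕ, ac ρ m * u ^ m

noncomputable def gfun' (ρ : ℝ) (u : ℝ) : ℝ := ∑' m : ℕ, ac ρ m * ((m : ℝ) * u ^ (m - 1))

lemma ac_succ_eq {ρ : ℝ} (hρ : 0 < ρ + 1) (m : ℕ) :
    ac ρ (m + 1) = ac ρ m / (((m:ℝ) + 1) * ((m:ℝ) + ρ + 1)) := by
  have h1 : ((m + 1 : ℕ) : ℝ) + ρ + 1 = ((m:ℝ) + ρ + 1) + 1 := by push_cast; ring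
  have h2 : (0:ℝ) < (m:ℝ) + ρ + 1 := by
    have : (0:ℝ) ≤ (m:ℝ) := m.cast_nonneg
    linarith
  rw [ac, ac, h1, Real.Gamma_add_one h2.ne', Nat.factorial_succ]
  have hg : Real.Gamma ((m:ℝ) + ρ + 1) ≠ 0 := (Real.Gamma_pos_of_pos h2).ne'
  have hf : ((m.factorial : ℕ) : ℝ) ≠ 0 := Nat.cast_ne_zero.2 m.factorial_ne_zero
  have h3 : ((m:ℝ) + 1) * ((m:ℝ) + ρ + 1) ≠ 0 := by positivity
  push_cast
  field_simp

lemma summable_master {ρ : ℝ} (hρ : 0 < ρ + 1) {r : ℝ} (hr : 0 ≤ r) :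
    Summable (fun m : ℕ => ac ρ m * ((m:ℝ) + 1) * r ^ m) := by
  apply summable_of_ratio_norm_eventually_le (r := 1/2) (by norm_num)
  have hN : ∀ᶠ m : ℕ in Filter.atTop, (4 * r : ℝ) ≤ (m : ℝ) := by
    obtain ⟨N, hN⟩ := exists_nat_ge (4 * r)
    filter_upwards [Filter.eventually_ge_atTop N] with m hm
    exact hN.trans (Nat.cast_le.2 hm)
  filter_upwards [hN] with m hm
  have hm0 : (0:ℝ) ≤ (m:ℝ) := m.cast_nonneg
  have hacp : 0 < ac ρ m := ac_pos hρ m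
  have hacp1 : 0 < ac ρ (m+1) := ac_pos hρ (m+1)
  have hrp : (0:ℝ) ≤ r ^ m := pow_nonneg hr m
  have habs1 : (0:ℝ) ≤ ac ρ (m+1) * (((m+1:ℕ):ℝ) + 1) * r ^ (m+1) := by
    have : (0:ℝ) ≤ (((m+1:ℕ):ℝ) + 1) := by positivity
    exact mul_nonneg (mul_nonneg hacp1.le this) (pow_nonneg hr _)
  have habs2 : (0:ℝ) ≤ ac ρ m * ((m:ℝ) + 1) * r ^ m := by
    have : (0:ℝ) ≤ ((m:ℝ) + 1) := by positivity
    exact mul_nonneg (mul_nonneg hacp.le this) hrp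
  rw [Real.norm_eq_abs, Real.norm_eq_abs, abs_of_nonneg habs1, abs_of_nonneg habs2]
  have hstep : ac ρ (m+1) * (((m+1:ℕ):ℝ) + 1) * r ^ (m+1)
      = (ac ρ m * r ^ m) * (r * ((m:ℝ)+2) / (((m:ℝ)+1) * ((m:ℝ)+ρ+1))) := by
    rw [ac_succ_eq hρ m, pow_succ]
    push_cast
    ring
  rw [hstep]
  have hkey : r * ((m:ℝ)+2) / (((m:ℝ)+1) * ((m:ℝ)+ρ+1)) ≤ ((m:ℝ)+1) / 2 := by
    rw [div_le_div_iff₀ (mul_pos (by positivity) (by linarith : (0:ℝ) < (m:ℝ)+ρ+1)) (by norm_num : (0:ℝ) < 2)]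
    nlinarith [mul_le_mul_of_nonneg_left hm (by positivity : (0:ℝ) ≤ (m:ℝ)+2),
      mul_nonneg hm0 hm0, mul_nonneg (mul_nonneg hm0 hm0) hm0, hρ, hr, hm0,
      mul_nonneg hm0 hρ.le, mul_nonneg (mul_nonneg hm0 hm0) hρ.le]
  calc (ac ρ m * r ^ m) * (r * ((m:ℝ)+2) / (((m:ℝ)+1) * ((m:ℝ)+ρ+1)))
      ≤ (ac ρ m * r ^ m) * (((m:ℝ)+1) / 2) :=
        mul_le_mul_of_nonneg_left hkey (mul_nonneg hacp.le hrp)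
    _ = 1/2 * (ac ρ m * ((m:ℝ) + 1) * r ^ m) := by ring

lemma summable_g {ρ : ℝ} (hρ : 0 < ρ + 1) {u : ℝ} (hu : 0 ≤ u) :
    Summable (fun m : ℕ => ac ρ m * u ^ m) := by
  refine Summable.of_nonneg_of_le
    (fun m => mul_nonneg (ac_pos hρ m).le (pow_nonneg hu m)) (fun m => ?_)
    (summable_master hρ hu)
  have h1 : 0 < ac ρ m := ac_pos hρ m
  have h2 : (0:ℝ) ≤ u ^ m := pow_nonneg hu m
  nlinarith [mul_nonneg h1.le h2]

lemma summable_gm {ρ : ℝ} (hρ : 0 < ρ + 1) {u : ℝ} (hu : 0 ≤ u) :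
    Summable (fun m : ℕ => ac ρ m * ((m:ℝ) * u ^ m)) := by
  refine Summable.of_nonneg_of_le
    (fun m => mul_nonneg (ac_pos hρ m).le (mul_nonneg m.cast_nonneg (pow_nonneg hu m)))
    (fun m => ?_) (summable_master hρ hu)
  have h1 : 0 < ac ρ m := ac_pos hρ m
  have h2 : (0:ℝ) ≤ u ^ m := pow_nonneg hu m
  nlinarith [mul_nonneg h1.le h2]

lemma hasDerivAt_gfun {ρ : ℝ} (hρ : 0 < ρ + 1) (u0 : ℝ) :
    HasDerivAt (gfun ρ) (gfun' ρ u0) u0 := by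
  set R : ℝ := |u0| + 1 with hR
  have hR0 : (0:ℝ) < R := by rw [hR]; positivity
  have hR1 : (1:ℝ) ≤ R := by
    have := abs_nonneg u0
    rw [hR]; linarith
  have hmem : u0 ∈ Set.Ioo (-R) R := by
    constructor
    · have := neg_abs_le u0; rw [hR]; linarith
    · have := le_abs_self u0; rw [hR]; linarith
  have hbound : Summable (fun m : ℕ => ac ρ m * ((m:ℝ) * R ^ (m - 1))) := by
    refine Summable.of_nonneg_of_le
      (fun m => mul_nonneg (ac_pos hρ m).le
        (mul_nonneg m.cast_nonneg (pow_nonneg hR0.le _))) (fun m => ?_)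
      (summable_master hρ hR0.le)
    have h1 : 0 < ac ρ m := ac_pos hρ m
    have h2 : R ^ (m - 1) ≤ R ^ m := pow_le_pow_right₀ hR1 (Nat.sub_le m 1)
    have h3 : (0:ℝ) ≤ R ^ m := pow_nonneg hR0.le m
    have h4 : (m:ℝ) * R ^ (m-1) ≤ ((m:ℝ) + 1) * R ^ m := by
      have : (m:ℝ) * R ^ (m-1) ≤ (m:ℝ) * R ^ m :=
        mul_le_mul_of_nonneg_left h2 m.cast_nonneg
      nlinarith
    calc ac ρ m * ((m:ℝ) * R ^ (m-1)) ≤ ac ρ m * (((m:ℝ) + 1) * R ^ m) :=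
          mul_le_mul_of_nonneg_left h4 h1.le
      _ = ac ρ m * ((m:ℝ) + 1) * R ^ m := by ring
  have := hasDerivAt_tsum_of_isPreconnected hbound isOpen_Ioo
    (convex_Ioo (-R) R).isPreconnected
    (g := fun (m : ℕ) (y : ℝ) => ac ρ m * y ^ m)
    (g' := fun (m : ℕ) (y : ℝ) => ac ρ m * ((m:ℝ) * y ^ (m - 1)))
    (fun m y _ => (hasDerivAt_pow m y).const_mul (ac ρ m))
    (fun m y hy => ?_) (y₀ := 0) ?_ ?_ hmem
  · exact this
  · -- norm bound
    have hy1 : |y| ≤ R := by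
      rcases hy with ⟨h1, h2⟩
      rw [abs_le]; constructor <;> linarith
    have h2 : |y| ^ (m-1) ≤ R ^ (m-1) := pow_le_pow_left₀ (abs_nonneg y) hy1 _
    have h1 : 0 < ac ρ m := ac_pos hρ m
    rw [Real.norm_eq_abs, abs_mul, abs_mul, abs_of_nonneg h1.le,
      abs_of_nonneg (m.cast_nonneg : (0:ℝ) ≤ (m:ℝ)), abs_pow]
    exact mul_le_mul_of_nonneg_left
      (mul_le_mul_of_nonneg_left h2 m.cast_nonneg) h1.le
  · constructor <;> [linarith [hmem.1, abs_nonneg u0]; linarith [hR0]]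
  · -- summable at 0
    apply summable_of_ne_finset_zero (s := {0})
    intro m hm
    have : m ≠ 0 := by simpa using hm
    simp [zero_pow this]

lemma gfun_pos {ρ : ℝ} (hρ : 0 < ρ + 1) {u : ℝ} (hu : 0 ≤ u) : 0 < gfun ρ u := by
  refine Summable.tsum_pos (summable_g hρ hu)
    (fun m => mul_nonneg (ac_pos hρ m).le (pow_nonneg hu m)) 0 ?_
  simpa using ac_pos hρ 0


noncomputable def Kcoef (ν : ℝ) (n : ℕ) : ℝ :=
  ∑ k ∈ Finset.range (n+1), (1 + 2*(k:ℝ) - 2*((n - k : ℕ):ℝ)) * ac ν k * ac (ν-1) (n-k)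

lemma Kcoef_zero_pos {ν : ℝ} (hν : 1/2 ≤ ν) : 0 < Kcoef ν 0 := by
  have hν1 : (0:ℝ) < ν + 1 := by linarith
  have hνm : (0:ℝ) < (ν-1) + 1 := by linarith
  have h1 := ac_pos hν1 0
  have h2 := ac_pos hνm 0
  simp only [Kcoef, Finset.sum_range_one, Nat.cast_zero, Nat.sub_zero]
  norm_num
  nlinarith

lemma Kcoef_nonneg {ν : ℝ} (hν : 1/2 ≤ ν) (n : ℕ) : 0 ≤ Kcoef ν n := by
  have hν0 : (0:ℝ) < ν := by linarith
  cases n with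
  | zero => exact (Kcoef_zero_pos hν).le
  | succ m =>
    rw [Kcoef]
    have hcongr : ∀ k ∈ Finset.range (m+2),
        (1 + 2*(k:ℝ) - 2*(((m+1) - k : ℕ):ℝ)) * ac ν k * ac (ν-1) ((m+1)-k)
          = (4*(k:ℝ) - 2*m - 1) * ac ν k * ac (ν-1) ((m+1)-k) := by
      intro k hk
      have hk' : k ≤ m + 1 := Nat.lt_succ_iff.mp (Finset.mem_range.mp hk)
      have : (((m+1) - k : ℕ):ℝ) = (m:ℝ) + 1 - k := by
        rw [Nat.cast_sub hk']; push_cast; ring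
      rw [this]
      ring
    rw [Finset.sum_congr rfl hcongr, keyK hν0 m]
    have hν1 : (0:ℝ) < ν + 1 := by linarith
    have hp1 : (0:ℝ) < asc (2*ν + m + 1) m := asc_pos (by linarith [Nat.cast_nonneg (α := ℝ) m]) m
    have hp2 : (0:ℝ) < asc ν (m+1) := asc_pos hν0 _
    have hp3 : (0:ℝ) < asc (ν+1) m := asc_pos hν1 _
    have hG1 : (0:ℝ) < Real.Gamma (ν + 1) := Real.Gamma_pos_of_pos hν1
    have hG : (0:ℝ) < Real.Gamma ν := Real.Gamma_pos_of_pos hν0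
    have hf : (0:ℝ) < ((m+1).factorial : ℝ) := by
      exact_mod_cast (m+1).factorial_pos
    have hm1 : (0:ℝ) < ν + m + 1 := by
      have : (0:ℝ) ≤ (m:ℝ) := m.cast_nonneg
      linarith
    have h2ν : (0:ℝ) ≤ 2*ν - 1 := by linarith
    positivity

lemma mul_gfun' {ρ : ℝ} (u : ℝ) :
    u * gfun' ρ u = ∑' m : ℕ, ac ρ m * ((m:ℝ) * u ^ m) := by
  rw [gfun', ← tsum_mul_left]
  apply tsum_congr
  intro m
  cases m with
  | zero => simp
  | succ k =>
    have : (k + 1 - 1 : ℕ) = k := by omega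
    rw [this]
    push_cast
    ring

lemma Nval_eq {ν : ℝ} (hν : 1/2 ≤ ν) {u : ℝ} (hu : 0 < u) :
    gfun ν u * gfun (ν-1) u + 2*u*gfun' ν u * gfun (ν-1) u - 2*u*gfun ν u * gfun' (ν-1) u
      = ∑' n : ℕ, Kcoef ν n * u ^ n ∧ Summable (fun n : ℕ => Kcoef ν n * u ^ n) := by
  have hν1 : (0:ℝ) < ν + 1 := by linarith
  have hνm : (0:ℝ) < (ν-1) + 1 := by linarith
  set p : ℕ → ℝ := fun m => ac ν m * u ^ m with hp
  set q : ℕ → ℝ := fun m => ac (ν-1) m * u ^ m with hq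
  set P : ℕ → ℝ := fun m => ac ν m * ((m:ℝ) * u ^ m) with hP
  set Q : ℕ → ℝ := fun m => ac (ν-1) m * ((m:ℝ) * u ^ m) with hQ
  have hpn : ∀ m, 0 ≤ p m := fun m => mul_nonneg (ac_pos hν1 m).le (pow_nonneg hu.le m)
  have hqn : ∀ m, 0 ≤ q m := fun m => mul_nonneg (ac_pos hνm m).le (pow_nonneg hu.le m)
  have hPn : ∀ m, 0 ≤ P m := fun m => mul_nonneg (ac_pos hν1 m).le
    (mul_nonneg m.cast_nonneg (pow_nonneg hu.le m))
  have hQn : ∀ m, 0 ≤ Q m := fun m => mul_nonneg (ac_pos hνm m).le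
    (mul_nonneg m.cast_nonneg (pow_nonneg hu.le m))
  have np : Summable (fun m => ‖p m‖) := by
    have : (fun m => ‖p m‖) = p := funext fun m => Real.norm_of_nonneg (hpn m)
    rw [this]; exact summable_g hν1 hu.le
  have nq : Summable (fun m => ‖q m‖) := by
    have : (fun m => ‖q m‖) = q := funext fun m => Real.norm_of_nonneg (hqn m)
    rw [this]; exact summable_g hνm hu.le
  have nP : Summable (fun m => ‖P m‖) := by
    have : (fun m => ‖P m‖) = P := funext fun m => Real.norm_of_nonneg (hPn m)
    rw [this]; exact summable_gm hν1 hu.le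
  have nQ : Summable (fun m => ‖Q m‖) := by
    have : (fun m => ‖Q m‖) = Q := funext fun m => Real.norm_of_nonneg (hQn m)
    rw [this]; exact summable_gm hνm hu.le
  have hAB : gfun ν u * gfun (ν-1) u
      = ∑' n : ℕ, ∑ k ∈ Finset.range (n+1), p k * q (n-k) :=
    tsum_mul_tsum_eq_tsum_sum_range_of_summable_norm np nq
  have hPB : (u * gfun' ν u) * gfun (ν-1) u
      = ∑' n : ℕ, ∑ k ∈ Finset.range (n+1), P k * q (n-k) := by
    rw [mul_gfun' u]
    exact tsum_mul_tsum_eq_tsum_sum_range_of_summable_norm nP nq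
  have hAQ : gfun ν u * (u * gfun' (ν-1) u)
      = ∑' n : ℕ, ∑ k ∈ Finset.range (n+1), p k * Q (n-k) := by
    rw [mul_gfun' u]
    exact tsum_mul_tsum_eq_tsum_sum_range_of_summable_norm np nQ
  have s1 : Summable (fun n : ℕ => ∑ k ∈ Finset.range (n+1), p k * q (n-k)) :=
    (summable_norm_sum_mul_range_of_summable_norm np nq).of_norm
  have s2 : Summable (fun n : ℕ => ∑ k ∈ Finset.range (n+1), P k * q (n-k)) :=
    (summable_norm_sum_mul_range_of_summable_norm nP nq).of_norm
  have s3 : Summable (fun n : ℕ => ∑ k ∈ Finset.range (n+1), p k * Q (n-k)) :=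
    (summable_norm_sum_mul_range_of_summable_norm np nQ).of_norm
  have pointwise : ∀ n : ℕ,
      (∑ k ∈ Finset.range (n+1), p k * q (n-k)) + 2 * (∑ k ∈ Finset.range (n+1), P k * q (n-k))
        - 2 * (∑ k ∈ Finset.range (n+1), p k * Q (n-k)) = Kcoef ν n * u ^ n := by
    intro n
    rw [Finset.mul_sum, Finset.mul_sum, ← Finset.sum_add_distrib, ← Finset.sum_sub_distrib,
      Kcoef, Finset.sum_mul]
    apply Finset.sum_congr rfl
    intro k hk
    have hk' : k ≤ n := Nat.lt_succ_iff.mp (Finset.mem_range.mp hk)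
    have hpow : u ^ k * u ^ (n - k) = u ^ n := by
      rw [← pow_add, Nat.add_sub_cancel' hk']
    rw [hp, hq, hP, hQ]
    simp only
    linear_combination ((1 + 2*(k:ℝ) - 2*((n - k : ℕ):ℝ)) * ac ν k * ac (ν-1) (n-k)) * hpow
  have hsum : Summable (fun n : ℕ => Kcoef ν n * u ^ n) := by
    refine Summable.congr ?_ pointwise
    exact (s1.add (s2.mul_left 2)).sub (s3.mul_left 2)
  constructor
  · have : gfun ν u * gfun (ν-1) u + 2*u*gfun' ν u * gfun (ν-1) u - 2*u*gfun ν u * gfun' (ν-1) u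
        = gfun ν u * gfun (ν-1) u + 2*((u * gfun' ν u) * gfun (ν-1) u)
          - 2*(gfun ν u * (u * gfun' (ν-1) u)) := by ring
    rw [this, hAB, hPB, hAQ, ← tsum_mul_left, ← tsum_mul_left,
      ← Summable.tsum_add s1 (s2.mul_left 2), ← Summable.tsum_sub ((s1.add (s2.mul_left 2))) (s3.mul_left 2)]
    exact tsum_congr pointwise
  · exact hsum

lemma Nval_pos {ν : ℝ} (hν : 1/2 ≤ ν) {u : ℝ} (hu : 0 < u) :
    0 < gfun ν u * gfun (ν-1) u + 2*u*gfun' ν u * gfun (ν-1) u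
        - 2*u*gfun ν u * gfun' (ν-1) u := by
  obtain ⟨heq, hsum⟩ := Nval_eq hν hu
  rw [heq]
  refine Summable.tsum_pos hsum (fun n => mul_nonneg (Kcoef_nonneg hν n) (pow_nonneg hu.le n)) 0 ?_
  simpa using Kcoef_zero_pos hν

noncomputable def Ffun (ν : ℝ) (x : ℝ) : ℝ := x * gfun ν (x^2) / gfun (ν-1) (x^2)

lemma hasDerivAt_Ffun {ν : ℝ} (hν : 1/2 ≤ ν) {x : ℝ} (hx : 0 < x) :
    ∃ d, HasDerivAt (Ffun ν) d x ∧ 0 < d := by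
  have hν1 : (0:ℝ) < ν + 1 := by linarith
  have hνm : (0:ℝ) < (ν-1) + 1 := by linarith
  have h2x : HasDerivAt (fun y : ℝ => y^2) (2*x) x := by
    simpa using hasDerivAt_pow 2 x
  have hA : HasDerivAt (fun y : ℝ => gfun ν (y^2)) (gfun' ν (x^2) * (2*x)) x :=
    by have := (hasDerivAt_gfun hν1 (x^2)).comp x h2x; exact this
  have hB : HasDerivAt (fun y : ℝ => gfun (ν-1) (y^2)) (gfun' (ν-1) (x^2) * (2*x)) x :=
    by have := (hasDerivAt_gfun hνm (x^2)).comp x h2x; exact this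
  have hNum : HasDerivAt (fun y : ℝ => y * gfun ν (y^2))
      (1 * gfun ν (x^2) + x * (gfun' ν (x^2) * (2*x))) x :=
    (hasDerivAt_id' (x := x)).mul hA
  have hBpos : 0 < gfun (ν-1) (x^2) := gfun_pos hνm (sq_nonneg x)
  have hF := hNum.div hB hBpos.ne'
  refine ⟨_, hF, ?_⟩
  have hnum : (1 * gfun ν (x^2) + x * (gfun' ν (x^2) * (2*x))) * gfun (ν-1) (x^2)
      - x * gfun ν (x^2) * (gfun' (ν-1) (x^2) * (2*x))
      = gfun ν (x^2) * gfun (ν-1) (x^2) + 2*x^2*gfun' ν (x^2) * gfun (ν-1) (x^2)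
        - 2*x^2*gfun ν (x^2) * gfun' (ν-1) (x^2) := by ring
  rw [div_pos_iff]
  left
  constructor
  · rw [hnum]
    exact Nval_pos hν (by positivity)
  · positivity

lemma strictMonoOn_Ffun {ν : ℝ} (hν : 1/2 ≤ ν) : StrictMonoOn (Ffun ν) (Set.Ioi 0) := by
  apply strictMonoOn_of_deriv_pos (convex_Ioi 0)
  · intro x hx
    obtain ⟨d, hd, _⟩ := hasDerivAt_Ffun hν (Set.mem_Ioi.mp hx)
    exact hd.continuousAt.continuousWithinAt
  · intro x hx
    rw [interior_Ioi] at hx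
    obtain ⟨d, hd, hdpos⟩ := hasDerivAt_Ffun hν (Set.mem_Ioi.mp hx)
    rwa [hd.deriv]

end BesselAux


lemma besselI_eq_gfun {ρ t : ℝ} (ht : 0 < t) :
    besselI ρ t = (t/2) ^ ρ * BesselAux.gfun ρ ((t/2)^2) := by
  have hx : (0:ℝ) < t/2 := by linarith
  rw [besselI, BesselAux.gfun, ← tsum_mul_left]
  apply tsum_congr
  intro m
  have h1 : (t/2) ^ (2*(m:ℝ) + ρ) = ((t/2)^2) ^ m * (t/2) ^ ρ := by
    rw [Real.rpow_add hx]
    congr 1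
    have h2 : (2*(m:ℝ)) = ((2*m : ℕ) : ℝ) := by push_cast; ring
    rw [h2, Real.rpow_natCast, pow_mul]
  rw [h1]
  simp only [BesselAux.ac]
  ring

lemma besselRatio_eq_Ffun {ν t : ℝ} (ht : 0 < t) :
    besselRatio ν t = BesselAux.Ffun ν (t/2) := by
  have hx : (0:ℝ) < t/2 := by linarith
  rw [besselRatio, besselI_eq_gfun ht, besselI_eq_gfun ht, BesselAux.Ffun]
  have hsplit : (t/2) ^ ν = (t/2) ^ (ν-1) * (t/2) := by
    have h := Real.rpow_add_one (ne_of_gt hx) (ν-1)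
    rw [sub_add_cancel] at h
    rw [h]
  rw [hsplit, mul_assoc]
  exact mul_div_mul_left _ _ (Real.rpow_pos_of_pos hx (ν-1)).ne'

/-- **Lemma.** For `ν ≥ 1/2`, `t ↦ f_ν(t) = I_ν(t)/I_{ν-1}(t)` is strictly increasing on
`(0,∞)`. -/
theorem strictMonoOn_besselRatio (ν : ℝ) (hν : 1 / 2 ≤ ν) :
    StrictMonoOn (besselRatio ν) (Set.Ioi (0:ℝ)) := by
  intro s hs t ht hst
  rw [besselRatio_eq_Ffun (Set.mem_Ioi.mp hs), besselRatio_eq_Ffun (Set.mem_Ioi.mp ht)]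
  exact BesselAux.strictMonoOn_Ffun hν
    (Set.mem_Ioi.mpr (by have := Set.mem_Ioi.mp hs; linarith))
    (Set.mem_Ioi.mpr (by have := Set.mem_Ioi.mp ht; linarith))
    (by linarith)


end
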